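/- (Monotone convergence of solutions) Let α ∈ ℝ, f : V → ℝ, and (u_n) a monotone increasing sequence of bounded non-negative functions on V converging pointwise to u, such that (L̃+α)u_n(x) → f(x) for every x. Then ∑_y b(x,y)|u(y)| < ∞ for all x and (L̃+α)u = f. -/
import Mathlib


/-- The formal Laplacian `L̃u(x) = (1/m(x)) ∑_y b(x,y)(u(x)-u(y)) + (c(x)/m(x))u(x)`. -/
noncomputable def formalL {V : Type*} (b : V → V → ℝ) (c m : V → ℝ) (u : V → ℝ) (x : V) : ℝ :=
  (1 / m x) * ∑' y, b x y * (u x - u y) + (c x / m x) * u x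

/-- **Monotone convergence of solutions.** If `(u_n)` is a monotone increasing
sequence of bounded non-negative functions converging pointwise to `u` with
`(L̃+α)u_n(x) → f(x)` for every `x`, then `u` lies in the formal domain of `L̃` and
`(L̃+α)u = f`. -/
theorem monotone_convergence_of_solutions
    (V : Type*) [Countable V] (m : V → ℝ) (hm : ∀ x, 0 < m x)
    (b : V → V → ℝ) (c : V → ℝ)
    (hb_symm : ∀ x y, b x y = b y x) (hb_nonneg : ∀ x y, 0 ≤ b x y)
    (hb_diag : ∀ x, b x x = 0) (hb_sum : ∀ x, Summable fun y => b x y)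
    (hc : ∀ x, 0 ≤ c x)
    (α : ℝ) (f u : V → ℝ) (un : ℕ → V → ℝ)
    (hpos : ∀ n x, 0 ≤ un n x)
    (hbdd : ∀ n, ∃ C, ∀ x, un n x ≤ C)
    (hmono : ∀ n x, un n x ≤ un (n + 1) x)
    (hptw : ∀ x, Filter.Tendsto (fun n => un n x) Filter.atTop (nhds (u x)))
    (hdomn : ∀ n x, Summable fun y => b x y * |un n y|)
    (hconv : ∀ x, Filter.Tendsto (fun n => formalL b c m (un n) x + α * un n x)
      Filter.atTop (nhds (f x))) :
    (∀ x, Summable fun y => b x y * |u y|) ∧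
      ∀ x, formalL b c m u x + α * u x = f x := by
  have hm0 : ∀ x, m x ≠ 0 := fun x => (hm x).ne'
  have hu0 : ∀ x, 0 ≤ u x := fun x => ge_of_tendsto' (hptw x) (fun n => hpos n x)
  have hmon : ∀ x, Monotone fun n => un n x := fun x =>
    monotone_nat_of_le_succ (fun n => hmono n x)
  have hule : ∀ n x, un n x ≤ u x := fun n x => (hmon x).ge_of_tendsto (hptw x) n
  have key : ∀ x, Summable (fun y => b x y * u y) ∧
      ∑' y, b x y * u y = u x * (∑' y, b x y)
        - m x * (f x - (c x / m x) * u x - α * u x) := by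
    intro x
    set B := ∑' y, b x y with hB
    have hsumn : ∀ n, Summable fun y => b x y * un n y := by
      intro n
      have := hdomn n x
      simpa [abs_of_nonneg (hpos n _)] using this
    set A : ℝ := u x * B - m x * (f x - (c x / m x) * u x - α * u x) with hA
    set An : ℕ → ℝ := fun n => ∑' y, b x y * un n y with hAn
    have hform : ∀ n, formalL b c m (un n) x + α * un n x
        = (1 / m x) * (un n x * B - An n) + (c x / m x) * un n x + α * un n x := by
      intro n
      have h1 : (fun y => b x y * (un n x - un n y))
          = fun y => un n x * b x y - b x y * un n y := by
        funext y; ring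
      have h2 : ∑' y, b x y * (un n x - un n y) = un n x * B - An n := by
        rw [h1, Summable.tsum_sub ((hb_sum x).mul_left _) (hsumn n), tsum_mul_left]
      simp [formalL, h2]
    have hAnt : Filter.Tendsto An Filter.atTop (nhds A) := by
      have hAn_eq : ∀ n, An n = un n x * B
          - m x * ((formalL b c m (un n) x + α * un n x)
            - (c x / m x) * un n x - α * un n x) := by
        intro n
        rw [hform n]
        field_simp [hm0 x]
        ring
      have h : Filter.Tendsto (fun n => un n x * B
          - m x * ((formalL b c m (un n) x + α * un n x)
            - (c x / m x) * un n x - α * un n x)) Filter.atTop (nhds A) := by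
        rw [hA]
        apply Filter.Tendsto.sub ((hptw x).mul_const B)
        apply Filter.Tendsto.const_mul
        exact ((hconv x).sub ((hptw x).const_mul _)).sub ((hptw x).const_mul α)
      exact h.congr (fun n => (hAn_eq n).symm)
    have hAnmono : Monotone An := by
      intro i j hij
      exact Summable.tsum_le_tsum (fun y => mul_le_mul_of_nonneg_left ((hmon y) hij) (hb_nonneg x y))
        (hsumn i) (hsumn j)
    have hAnleA : ∀ n, An n ≤ A := fun n => hAnmono.ge_of_tendsto hAnt n
    have hfin : ∀ s : Finset V, ∑ y ∈ s, b x y * u y ≤ A := by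
      intro s
      have hlim : Filter.Tendsto (fun n => ∑ y ∈ s, b x y * un n y)
          Filter.atTop (nhds (∑ y ∈ s, b x y * u y)) :=
        tendsto_finset_sum _ (fun y _ => (hptw y).const_mul _)
      refine le_of_tendsto hlim (Filter.Eventually.of_forall fun n => ?_)
      calc ∑ y ∈ s, b x y * un n y ≤ An n :=
            Summable.sum_le_tsum s (fun y _ => mul_nonneg (hb_nonneg x y) (hpos n y)) (hsumn n)
        _ ≤ A := hAnleA n
    have hsum : Summable fun y => b x y * u y :=
      summable_of_sum_le (fun y => mul_nonneg (hb_nonneg x y) (hu0 y)) hfin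
    have htle : ∑' y, b x y * u y ≤ A := Summable.tsum_le_of_sum_le hsum hfin
    have hge : A ≤ ∑' y, b x y * u y := by
      refine le_of_tendsto hAnt (Filter.Eventually.of_forall fun n => ?_)
      exact Summable.tsum_le_tsum (fun y => mul_le_mul_of_nonneg_left (hule n y) (hb_nonneg x y))
        (hsumn n) hsum
    exact ⟨hsum, le_antisymm htle hge⟩
  constructor
  · intro x
    refine (key x).1.congr fun y => ?_
    rw [abs_of_nonneg (hu0 y)]
  · intro x
    obtain ⟨hsum, htsum⟩ := key x
    have h2 : ∑' y, b x y * (u x - u y) = u x * (∑' y, b x y) - ∑' y, b x y * u y := by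
      have h1 : (fun y => b x y * (u x - u y)) = fun y => u x * b x y - b x y * u y := by
        funext y; ring
      rw [h1, Summable.tsum_sub ((hb_sum x).mul_left _) hsum, tsum_mul_left]
    rw [formalL, h2, htsum]
    field_simp [hm0 x]
    ring
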